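/- For all k, p > 0 there exists n such that for every regressive function F: S_k([n]) → [n] there exists E ∈ S_p([n]) such that: (i) for all x, y ∈ S_k(E), if min(x) = min(y) then F(x) = F(y); and (ii) for all x < y in E, 2^x < y. -/

import Mathlib

open Filter

lemma sInf_insert_eq (a : ℕ) (y : Finset ℕ) (h : ∀ b ∈ y, a < b) :
    sInf (↑(insert a y) : Set ℕ) = a := by
  rw [Finset.coe_insert]
  have hmem : sInf (insert a (↑y : Set ℕ)) ∈ insert a (↑y : Set ℕ) :=
    Nat.sInf_mem ⟨a, by simp⟩
  have hle : sInf (insert a (↑y : Set ℕ)) ≤ a := Nat.sInf_le (by simp)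
  rcases Set.mem_insert_iff.1 hmem with h1 | h1
  · exact h1
  · rw [Finset.mem_coe] at h1
    exact absurd (h _ h1) (not_lt.2 hle)

/-- Infinite Ramsey theorem for `k`-subsets of an infinite set of naturals. -/
theorem myRamsey : ∀ (k r : ℕ) (c : Finset ℕ → ℕ), (∀ x, c x < r) →
    ∀ S : Set ℕ, S.Infinite →
    ∃ T : Set ℕ, T ⊆ S ∧ T.Infinite ∧ ∃ j, j < r ∧
      ∀ x : Finset ℕ, ↑x ⊆ T → x.card = k → c x = j := by
  intro k
  induction k with
  | zero =>
    intro r c hc S hS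
    refine ⟨S, subset_rfl, hS, c ∅, hc ∅, fun x hx hcard => ?_⟩
    rw [Finset.card_eq_zero] at hcard; rw [hcard]
  | succ k ih =>
    intro r c hc S hS
    -- one-step refinement
    have step : ∀ U : Set ℕ, U.Infinite → ∃ V : Set ℕ, V ⊆ U ∧ V.Infinite ∧
        (∀ b ∈ V, sInf U < b) ∧ ∃ j, j < r ∧
        ∀ y : Finset ℕ, ↑y ⊆ V → y.card = k → c (insert (sInf U) y) = j := by
      intro U hU
      set a := sInf U with ha
      have hU' : ({b | b ∈ U ∧ a < b} : Set ℕ).Infinite := by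
        apply (hU.diff (Set.finite_Iic a)).mono
        intro b hb
        exact ⟨hb.1, lt_of_not_ge (fun h => hb.2 h)⟩
      obtain ⟨T, hTsub, hTinf, j, hjr, hj⟩ :=
        ih r (fun y => c (insert a y)) (fun y => hc _) _ hU'
      exact ⟨T, fun b hb => (hTsub hb).1, hTinf, fun b hb => (hTsub hb).2, j, hjr, hj⟩
    choose next hsub hinf hgt j hjr hcol using step
    -- iterate
    set f : ℕ → {U : Set ℕ // U.Infinite} :=
      fun n => Nat.rec ⟨S, hS⟩ (fun _ p => ⟨next p.1 p.2, hinf p.1 p.2⟩) n with hf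
    have hfs : ∀ n, (f (n+1)).1 = next (f n).1 (f n).2 := fun n => rfl
    set a : ℕ → ℕ := fun n => sInf (f n).1 with haf
    have hmem : ∀ n, a n ∈ (f n).1 := fun n => Nat.sInf_mem (f n).2.nonempty
    have hmono : ∀ m n, m ≤ n → (f n).1 ⊆ (f m).1 := by
      intro m n hmn
      induction n, hmn using Nat.le_induction with
      | base => exact subset_rfl
      | succ n hmn ihn =>
        intro b hb
        exact ihn (by rw [hfs n] at hb; exact hsub _ _ hb)
    have hgt' : ∀ n b, b ∈ (f (n+1)).1 → a n < b := by
      intro n b hb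
      rw [hfs n] at hb; exact hgt _ _ _ hb
    have hamono : StrictMono a := by
      apply strictMono_nat_of_lt_succ
      intro n
      exact hgt' n _ (hmem (n+1))
    set jn : ℕ → ℕ := fun n => j (f n).1 (f n).2 with hjnd
    have hcol' : ∀ n (y : Finset ℕ), ↑y ⊆ (f (n+1)).1 → y.card = k →
        c (insert (a n) y) = jn n := by
      intro n y hy hcard
      rw [hfs n] at hy
      exact hcol _ _ y hy hcard
    -- pigeonhole on colors
    have hpig : ∃ j₀, j₀ < r ∧ ({n | jn n = j₀} : Set ℕ).Infinite := by
      by_contra hcon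
      push_neg at hcon
      have hsub' : (Set.univ : Set ℕ) ⊆ ⋃ i ∈ Finset.range r, {n | jn n = i} := by
        intro n _
        exact Set.mem_biUnion (Finset.mem_range.2 (hjr _ _)) rfl
      exact Set.infinite_univ
        ((Set.Finite.biUnion (Finset.range r).finite_toSet
          (fun i hi => (hcon i (Finset.mem_range.1 hi)))).subset hsub')
    obtain ⟨j₀, hj₀r, hIinf⟩ := hpig
    refine ⟨a '' {n | jn n = j₀}, ?_, hIinf.image (Set.injOn_of_injective hamono.injective),
      j₀, hj₀r, ?_⟩
    · rintro b ⟨n, _, rfl⟩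
      exact hmono 0 n (Nat.zero_le n) (hmem n)
    · intro x hx hcard
      have hxne : x.Nonempty := Finset.card_pos.1 (by omega)
      have hmin : sInf (↑x : Set ℕ) ∈ x := Nat.sInf_mem (hxne.to_set)
      obtain ⟨n, hnI, hn⟩ := hx hmin
      set m := sInf (↑x : Set ℕ) with hm
      have herased : ∀ b ∈ x.erase m, b ∈ (f (n+1)).1 := by
        intro b hb
        have hbx : b ∈ x := Finset.mem_of_mem_erase hb
        obtain ⟨n', hn'I, hn'⟩ := hx hbx
        have hbm : m < b := by
          have : m ≤ b := Nat.sInf_le hbx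
          exact lt_of_le_of_ne this (Ne.symm (Finset.ne_of_mem_erase hb))
        have : n < n' := by
          rw [← hn, ← hn'] at hbm
          exact hamono.lt_iff_lt.1 hbm
        exact hmono (n+1) n' this (hn' ▸ hmem n')
      have hcarde : (x.erase m).card = k := by
        rw [Finset.card_erase_of_mem hmin, hcard]
        omega
      have := hcol' n (x.erase m) (fun b hb => herased b hb) hcarde
      rw [hn, Finset.insert_erase hmin] at this
      rw [this, hnI]

/-- Infinite Kanamori–McAloon: regressive functions admit infinite min-homogeneous sets. -/
theorem myKM (k : ℕ) (F : Finset ℕ → ℕ)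
    (hF : ∀ x : Finset ℕ, x.card = k + 1 → 0 < sInf (↑x : Set ℕ) → F x < sInf (↑x : Set ℕ)) :
    ∃ M : Set ℕ, M.Infinite ∧ (∀ m ∈ M, 0 < m) ∧
      ∀ x y : Finset ℕ, ↑x ⊆ M → ↑y ⊆ M → x.card = k + 1 → y.card = k + 1 →
        sInf (↑x : Set ℕ) = sInf (↑y : Set ℕ) → F x = F y := by
  have step : ∀ U : Set ℕ, U.Infinite → (∀ b ∈ U, 0 < b) →
      ∃ V : Set ℕ, V ⊆ U ∧ V.Infinite ∧ (∀ b ∈ V, sInf U < b) ∧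
      ∃ v, ∀ y : Finset ℕ, ↑y ⊆ V → y.card = k → F (insert (sInf U) y) = v := by
    intro U hU hUpos
    set a := sInf U with ha
    have haU : a ∈ U := Nat.sInf_mem hU.nonempty
    have hapos : 0 < a := hUpos a haU
    have hU' : ({b | b ∈ U ∧ a < b} : Set ℕ).Infinite := by
      apply (hU.diff (Set.finite_Iic a)).mono
      intro b hb
      exact ⟨hb.1, lt_of_not_ge (fun h => hb.2 h)⟩
    obtain ⟨T, hTsub, hTinf, j, hjr, hj⟩ :=
      myRamsey k a (fun y => min (F (insert a y)) (a - 1))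
        (fun y => lt_of_le_of_lt (min_le_right _ _) (by omega)) _ hU'
    refine ⟨T, fun b hb => (hTsub hb).1, hTinf, fun b hb => (hTsub hb).2, j, ?_⟩
    intro y hy hcard
    have hygt : ∀ b ∈ y, a < b := fun b hb => (hTsub (hy hb)).2
    have hay : a ∉ y := fun h => lt_irrefl a (hygt a h)
    have hsinf : sInf (↑(insert a y) : Set ℕ) = a := sInf_insert_eq a y hygt
    have hFlt : F (insert a y) < a := by
      have := hF (insert a y) (by rw [Finset.card_insert_of_notMem hay, hcard])
        (by rw [hsinf]; exact hapos)
      rwa [hsinf] at this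
    have := hj y hy hcard
    simp only [min_eq_left (by omega : F (insert a y) ≤ a - 1)] at this
    rw [this] at hFlt ⊢
  choose next hsub hinf hgt v hcol using step
  have hS : ({b : ℕ | 0 < b}).Infinite := by
    apply Set.infinite_of_forall_exists_gt
    intro n
    exact ⟨n + 1, Nat.succ_pos n, Nat.lt_succ_self n⟩
  set f : ℕ → {U : Set ℕ // U.Infinite ∧ ∀ b ∈ U, 0 < b} :=
    fun n => Nat.rec ⟨{b : ℕ | 0 < b}, hS, fun b hb => hb⟩
      (fun _ p => ⟨next p.1 p.2.1 p.2.2, hinf p.1 p.2.1 p.2.2,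
        fun b hb => p.2.2 b (hsub p.1 p.2.1 p.2.2 hb)⟩) n with hf
  have hfs : ∀ n, (f (n+1)).1 = next (f n).1 (f n).2.1 (f n).2.2 := fun n => rfl
  set a : ℕ → ℕ := fun n => sInf (f n).1 with haf
  have hmem : ∀ n, a n ∈ (f n).1 := fun n => Nat.sInf_mem (f n).2.1.nonempty
  have hmono : ∀ m n, m ≤ n → (f n).1 ⊆ (f m).1 := by
    intro m n hmn
    induction n, hmn using Nat.le_induction with
    | base => exact subset_rfl
    | succ n hmn ihn =>
      intro b hb
      exact ihn (by rw [hfs n] at hb; exact hsub _ _ _ hb)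
  have hgt' : ∀ n b, b ∈ (f (n+1)).1 → a n < b := by
    intro n b hb
    rw [hfs n] at hb; exact hgt _ _ _ _ hb
  have hamono : StrictMono a := by
    apply strictMono_nat_of_lt_succ
    intro n
    exact hgt' n _ (hmem (n+1))
  set vn : ℕ → ℕ := fun n => v (f n).1 (f n).2.1 (f n).2.2 with hvnd
  have hcol' : ∀ n (y : Finset ℕ), ↑y ⊆ (f (n+1)).1 → y.card = k →
      F (insert (a n) y) = vn n := by
    intro n y hy hcard
    rw [hfs n] at hy
    exact hcol _ _ _ y hy hcard
  have key : ∀ (x : Finset ℕ) (n : ℕ), ↑x ⊆ Set.range a → x.card = k + 1 →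
      sInf (↑x : Set ℕ) = a n → F x = vn n := by
    intro x n hx hcard hmin
    have hxne : x.Nonempty := Finset.card_pos.1 (by omega)
    have hminx : sInf (↑x : Set ℕ) ∈ x := Nat.sInf_mem hxne.to_set
    set m := sInf (↑x : Set ℕ) with hm
    have herased : ∀ b ∈ x.erase m, b ∈ (f (n+1)).1 := by
      intro b hb
      have hbx : b ∈ x := Finset.mem_of_mem_erase hb
      obtain ⟨n', hn'⟩ := hx hbx
      have hbm : m < b := lt_of_le_of_ne (Nat.sInf_le hbx) (Ne.symm (Finset.ne_of_mem_erase hb))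
      have : n < n' := by
        rw [hmin, ← hn'] at hbm
        exact hamono.lt_iff_lt.1 hbm
      exact hmono (n+1) n' this (hn' ▸ hmem n')
    have hcarde : (x.erase m).card = k := by
      rw [Finset.card_erase_of_mem hminx, hcard]
      omega
    have := hcol' n (x.erase m) (fun b hb => herased b hb) hcarde
    rw [← hmin, Finset.insert_erase hminx] at this
    exact this
  refine ⟨Set.range a, ?_, ?_, ?_⟩
  · exact Set.infinite_range_of_injective hamono.injective
  · rintro m ⟨n, rfl⟩
    exact (f n).2.2 _ (hmem n)
  · intro x y hx hy hcx hcy hmins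
    have hxne : x.Nonempty := Finset.card_pos.1 (by omega)
    obtain ⟨n, hn⟩ := hx (Nat.sInf_mem hxne.to_set)
    rw [key x n hx hcx hn.symm, key y n hy hcy (hmins ▸ hn.symm)]

lemma ultra_pigeon (U : Ultrafilter ℕ) (g : ℕ → ℕ) (r : ℕ) (h : ∀ n, g n ≤ r) :
    ∃ v, ∀ᶠ n in (U : Filter ℕ), g n = v := by
  have hmem : {m : ℕ | m ≤ r} ∈ U.map g := by
    have : g ⁻¹' {m : ℕ | m ≤ r} = Set.univ := Set.eq_univ_of_forall (fun n => h n)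
    rw [Ultrafilter.mem_map, this]
    exact Filter.univ_mem
  obtain ⟨v, _, hv⟩ := Ultrafilter.eq_pure_of_finite_mem (Set.finite_Iic r) hmem
  refine ⟨v, ?_⟩
  have : {v} ∈ U.map g := by rw [hv]; exact Filter.singleton_mem_pure
  rw [Ultrafilter.mem_map] at this
  filter_upwards [this] with n hn
  simpa using hn

/-- Theorem IV: Theorem I together with exponential growth of `E`. -/
theorem stmt_6 (k p : ℕ) (hk : 0 < k) (hp : 0 < p) :
    ∃ n : ℕ, ∀ F : Finset ℕ → ℕ,
      (∀ x : Finset ℕ, x ⊆ Finset.range n → x.card = k → F x < n) →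
      (∀ x : Finset ℕ, x ⊆ Finset.range n → x.card = k →
        0 < sInf (↑x : Set ℕ) → F x < sInf (↑x : Set ℕ)) →
      ∃ E : Finset ℕ, E ⊆ Finset.range n ∧ E.card = p ∧
        (∀ x y : Finset ℕ, x ⊆ E → y ⊆ E → x.card = k → y.card = k →
          sInf (↑x : Set ℕ) = sInf (↑y : Set ℕ) → F x = F y) ∧
        (∀ a ∈ E, ∀ b ∈ E, a < b → 2 ^ a < b) := by
  obtain ⟨k', rfl⟩ : ∃ k', k = k' + 1 := ⟨k - 1, by omega⟩
  by_contra hcon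
  push_neg at hcon
  choose Fn hFn1 hFn2 hFn3 using hcon
  set G : ℕ → Finset ℕ → ℕ := fun n x =>
    if x ⊆ Finset.range n ∧ x.card = k' + 1 ∧ 0 < sInf (↑x : Set ℕ) then Fn n x else 0
    with hG
  have hGdef : ∀ n x, G n x =
      if x ⊆ Finset.range n ∧ x.card = k' + 1 ∧ 0 < sInf (↑x : Set ℕ) then Fn n x else 0 :=
    fun _ _ => rfl
  have hGle : ∀ n x, G n x ≤ sInf (↑x : Set ℕ) := by
    intro n x
    rw [hGdef]
    split
    · next hcond => exact le_of_lt (hFn2 n x hcond.1 hcond.2.1 hcond.2.2)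
    · exact Nat.zero_le _
  set U : Ultrafilter ℕ := hyperfilter ℕ with hU
  have hcof : ∀ {s : Set ℕ}, s ∈ cofinite → s ∈ (U : Filter ℕ) :=
    fun hs => hyperfilter_le_cofinite hs
  have hx : ∀ x : Finset ℕ, ∃ v, ∀ᶠ n in (U : Filter ℕ), G n x = v :=
    fun x => ultra_pigeon U (fun n => G n x) (sInf (↑x : Set ℕ)) (fun n => hGle n x)
  choose Fl hFl using hx
  -- Fl is regressive
  have hFlreg : ∀ x : Finset ℕ, x.card = k' + 1 → 0 < sInf (↑x : Set ℕ) →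
      Fl x < sInf (↑x : Set ℕ) := by
    intro x hcard hpos
    have hev : ∀ᶠ n in (U : Filter ℕ), x ⊆ Finset.range n := by
      apply hcof
      rw [Nat.cofinite_eq_atTop]
      apply Filter.mem_atTop_sets.2
      refine ⟨(x.sup id) + 1, fun n hn => ?_⟩
      simp only [Set.mem_setOf_eq]
      intro b hb
      have : b ≤ x.sup id := Finset.le_sup (f := id) hb
      exact Finset.mem_range.2 (by omega)
    obtain ⟨n, hn1, hn2⟩ := ((hFl x).and hev).exists
    rw [← hn1, hGdef, if_pos ⟨hn2, hcard, hpos⟩]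
    exact hFn2 n x hn2 hcard hpos
  obtain ⟨M, hMinf, hMpos, hMhom⟩ := myKM k' Fl hFlreg
  -- build the fast-growing set E inside M
  have hMgt : ∀ N : ℕ, ∃ m, m ∈ M ∧ N < m := by
    intro N
    obtain ⟨m, hm, hm'⟩ := hMinf.exists_gt N
    exact ⟨m, hm, hm'⟩
  choose g hgM hggt using hMgt
  set e : ℕ → ℕ := fun i => Nat.rec (g 0) (fun _ prev => g (2 ^ prev)) i with he
  have heM : ∀ i, e i ∈ M := by
    intro i
    cases i with
    | zero => exact hgM 0
    | succ i => exact hgM _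
  have hestep : ∀ i, 2 ^ e i < e (i + 1) := fun i => hggt (2 ^ e i)
  have hemono : StrictMono e := by
    apply strictMono_nat_of_lt_succ
    intro i
    exact lt_trans (Nat.lt_two_pow_self) (hestep i)
  have hegrow : ∀ i j, i < j → 2 ^ e i < e j := by
    intro i j hij
    calc 2 ^ e i < e (i + 1) := hestep i
    _ ≤ e j := hemono.monotone hij
  set E : Finset ℕ := (Finset.range p).image e with hE
  have hEcard : E.card = p := by
    rw [hE, Finset.card_image_of_injective _ hemono.injective, Finset.card_range]
  have hEM : ∀ b ∈ E, b ∈ M := by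
    intro b hb
    rw [hE] at hb
    obtain ⟨i, _, rfl⟩ := Finset.mem_image.1 hb
    exact heM i
  -- choose a good n
  have hev1 : ∀ᶠ n in (U : Filter ℕ), ∀ x ∈ E.powerset, G n x = Fl x :=
    (Filter.eventually_all_finset E.powerset).2 (fun x _ => hFl x)
  have hev2 : ∀ᶠ n in (U : Filter ℕ), ∀ m ∈ E, m < n := by
    apply hcof
    rw [Nat.cofinite_eq_atTop]
    apply Filter.mem_atTop_sets.2
    refine ⟨(E.sup id) + 1, fun n hn => ?_⟩
    simp only [Set.mem_setOf_eq]
    intro m hm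
    have : m ≤ E.sup id := Finset.le_sup (f := id) hm
    omega
  obtain ⟨n, hn1, hn2⟩ := (hev1.and hev2).exists
  have hErange : E ⊆ Finset.range n := fun m hm => Finset.mem_range.2 (hn2 m hm)
  -- E is min-homogeneous for Fn n
  have hhom : ∀ x y : Finset ℕ, x ⊆ E → y ⊆ E → x.card = k' + 1 → y.card = k' + 1 →
      sInf (↑x : Set ℕ) = sInf (↑y : Set ℕ) → Fn n x = Fn n y := by
    intro x y hxE hyE hcx hcy hmins
    have hxpos : 0 < sInf (↑x : Set ℕ) := by
      have hxne : x.Nonempty := Finset.card_pos.1 (by omega)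
      have : sInf (↑x : Set ℕ) ∈ x := Nat.sInf_mem hxne.to_set
      exact hMpos _ (hEM _ (hxE this))
    have hypos : 0 < sInf (↑y : Set ℕ) := hmins ▸ hxpos
    have hxr : x ⊆ Finset.range n := hxE.trans hErange
    have hyr : y ⊆ Finset.range n := hyE.trans hErange
    have e1 : Fn n x = G n x := by rw [hGdef, if_pos ⟨hxr, hcx, hxpos⟩]
    have e2 : Fn n y = G n y := by rw [hGdef, if_pos ⟨hyr, hcy, hypos⟩]
    rw [e1, e2, hn1 x (Finset.mem_powerset.2 hxE), hn1 y (Finset.mem_powerset.2 hyE)]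
    exact hMhom x y (fun b hb => hEM b (hxE hb)) (fun b hb => hEM b (hyE hb)) hcx hcy hmins
  obtain ⟨a, haE, b, hbE, hab, hble⟩ := hFn3 n E hErange hEcard hhom
  -- contradiction with the growth of e
  rw [hE] at haE hbE
  obtain ⟨i, _, rfl⟩ := Finset.mem_image.1 haE
  obtain ⟨j, _, rfl⟩ := Finset.mem_image.1 hbE
  have hij : i < j := hemono.lt_iff_lt.1 hab
  exact absurd (hegrow i j hij) (not_lt.2 hble)
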